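/- Define the arithmetic function a by a(n) = α_1(n) + Σ_{ℓ≥4} (−1)^ℓ α_{ℓ−1}(n) · Σ_{k=2}^{⌊ℓ/2⌋} b_k · C(ℓ−k−2, k−2) for n ≥ 1 (a finite sum, since α_{ℓ−1}(n) = 0 once ℓ−1 > Ω(n)). Then in the ring of arithmetic functions under Dirichlet convolution, with ζ the arithmetic function constantly 1 and 1 the convolution identity (the function equal to 1 at n=1 and 0 elsewhere), the following identity holds: (ζ − 1) * a * a + ζ * a − ζ * (ζ − 1) = 0. -/

import Mathlib

/-- `alpha k m` is the number of `k`-tuples `(m₁, …, m_k)` of integers, each `≥ 2`,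
whose product is `m`. -/
noncomputable def alpha (k m : ℕ) : ℕ :=
  Nat.card {f : Fin k → ℕ // (∀ i, 2 ≤ f i) ∧ ∏ i, f i = m}

/-- The signed Catalan numbers `b_k = (-1)^{k-1} · Catalan(k-1)`. -/
def bcat (k : ℕ) : ℤ := (-1) ^ (k - 1) * (catalan (k - 1) : ℤ)

/-- `Omega m` is the number of prime factors of `m` counted with multiplicity. -/
def Omega (m : ℕ) : ℕ := m.primeFactorsList.length

/-- The coefficients
`a(n) = α₁(n) + Σ_{ℓ ≥ 4} (-1)^ℓ α_{ℓ-1}(n) Σ_{k=2}^{⌊ℓ/2⌋} b_k C(ℓ-k-2, k-2)`;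
the sum over `ℓ` is finite since `α_{ℓ-1}(n) = 0` once `ℓ - 1 > Ω(n)`,
so it may be truncated at `ℓ = Ω(n) + 1`. -/
noncomputable def aCoef (n : ℕ) : ℂ :=
  (alpha 1 n : ℂ) +
    ∑ l ∈ Finset.Icc 4 (Omega n + 1),
      (-1 : ℂ) ^ l * (alpha (l - 1) n : ℂ) *
        ∑ k ∈ Finset.Icc 2 (l / 2), (bcat k : ℂ) * (((l - k - 2).choose (k - 2) : ℕ) : ℂ)

/-- The arithmetic function with values `a(n)`. -/
noncomputable def aFun : ArithmeticFunction ℂ :=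
  ⟨fun n => if n = 0 then 0 else aCoef n, by simp⟩

/-- The arithmetic function `ζ` with `ζ(n) = 1` for all `n ≥ 1`. -/
noncomputable def zetaC : ArithmeticFunction ℂ :=
  ⟨fun n => if n = 0 then 0 else 1, by simp⟩

/-- Vandermonde convolution in the upper index. -/
lemma vand (p : ℕ) : ∀ t q : ℕ,
    ∑ a ∈ Finset.range (t + 1), a.choose p * (t - a).choose q = (t + 1).choose (p + q + 1) := by
  intro t
  induction t with
  | zero =>
    intro q
    cases p <;> cases q <;> simp [Nat.choose]
  | succ t ih =>
    intro q
    rw [Finset.sum_range_succ]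
    cases q with
    | zero =>
      simp only [Nat.choose_zero_right, mul_one]
      have h0 := ih 0
      simp only [Nat.choose_zero_right, mul_one, Nat.add_zero] at h0
      rw [h0, Nat.choose_succ_succ' (t + 1) p]
      ring
    | succ s =>
      have hstep : ∀ a ∈ Finset.range (t + 1),
          a.choose p * (t + 1 - a).choose (s + 1)
            = a.choose p * (t - a).choose s + a.choose p * (t - a).choose (s + 1) := by
        intro a ha
        rw [Finset.mem_range] at ha
        have h : t + 1 - a = (t - a) + 1 := by omega
        rw [h, Nat.choose_succ_succ' (t - a) s, Nat.mul_add]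
      rw [Finset.sum_congr rfl hstep, Finset.sum_add_distrib, ih s, ih (s + 1)]
      simp only [Nat.sub_self, Nat.choose_zero_succ, Nat.mul_zero, Nat.add_zero]
      rw [show p + (s + 1) + 1 = (p + s + 1) + 1 by omega,
        Nat.choose_succ_succ' (t + 1) (p + s + 1)]


/-- The signed catalan sequence as a complex number. -/
noncomputable def sC (k : ℕ) : ℂ := (-1) ^ (k - 1) * (catalan (k - 1) : ℂ)

lemma scat (K : ℕ) (hK : 2 ≤ K) :
    ∑ k ∈ Finset.Icc 1 (K - 1), sC k * sC (K - k) = -sC K := by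
  obtain ⟨n, rfl⟩ : ∃ n, K = n + 2 := ⟨K - 2, by omega⟩
  have h1 : Finset.Icc 1 (n + 2 - 1) = Finset.Ico 1 (n + 2) := by
    rw [show n + 2 - 1 = n + 1 from rfl, ← Finset.Ico_add_one_right_eq_Icc]
    rfl
  rw [h1, Finset.sum_Ico_eq_sum_range]
  have h2 : ∀ i ∈ Finset.range (n + 2 - 1), sC (1 + i) * sC (n + 2 - (1 + i))
      = (-1) ^ n * ((catalan i : ℂ) * (catalan (n - i) : ℂ)) := by
    intro i hi
    rw [Finset.mem_range] at hi
    have e1 : sC (1 + i) = (-1) ^ i * (catalan i : ℂ) := by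
      unfold sC
      congr 2
      · omega
      · congr 1; omega
    have e2 : sC (n + 2 - (1 + i)) = (-1) ^ (n - i) * (catalan (n - i) : ℂ) := by
      unfold sC
      congr 2
      · omega
      · congr 1; omega
    rw [e1, e2]
    have h3 : (-1 : ℂ) ^ i * (-1) ^ (n - i) = (-1) ^ n := by
      rw [← pow_add]; congr 1; omega
    calc (-1 : ℂ) ^ i * (catalan i : ℂ) * ((-1) ^ (n - i) * (catalan (n - i) : ℂ))
        = ((-1 : ℂ) ^ i * (-1) ^ (n - i)) * ((catalan i : ℂ) * (catalan (n - i) : ℂ)) := by ring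
      _ = (-1) ^ n * ((catalan i : ℂ) * (catalan (n - i) : ℂ)) := by rw [h3]
  rw [Finset.sum_congr rfl h2, ← Finset.mul_sum]
  have h3 : ∑ i ∈ Finset.range (n + 2 - 1), (catalan i : ℂ) * (catalan (n - i) : ℂ)
      = (catalan (n + 1) : ℂ) := by
    rw [catalan_succ n]
    push_cast
    rw [Fin.sum_univ_eq_sum_range (fun i => (catalan i : ℂ) * (catalan (n - i) : ℂ)) (n + 1)]
  rw [h3]
  unfold sC
  have e4 : ((-1 : ℂ)) ^ (n + 2 - 1) = -(-1) ^ n := by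
    rw [show n + 2 - 1 = n + 1 from rfl, pow_succ]; ring
  rw [e4, show n + 2 - 1 = n + 1 from rfl]
  ring


/-- inner Vandermonde step -/
lemma inner (m k1 k2 : ℕ) (hm : 7 ≤ m) (h1 : 2 ≤ k1) (h2 : 2 ≤ k2) :
    ∑ i ∈ Finset.Icc 3 (m - 4),
      (i - 1 - k1).choose (k1 - 2) * (m - 1 - i - 1 - k2).choose (k2 - 2)
      = (m - 2 - (k1 + k2)).choose (k1 + k2 - 3) := by
  by_cases hc : m - 2 ≤ k1 + k2
  · -- all terms vanish
    rw [Finset.sum_eq_zero, eq_comm, Nat.choose_eq_zero_of_lt (by omega)]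
    intro i hi
    rw [Finset.mem_Icc] at hi
    by_cases hik : i ≤ k1
    · rw [Nat.choose_eq_zero_of_lt (show i - 1 - k1 < k1 - 2 by omega), Nat.zero_mul]
    · rw [Nat.choose_eq_zero_of_lt (show m - 1 - i - 1 - k2 < k2 - 2 by omega), Nat.mul_zero]
  · -- main case
    push_neg at hc
    have hsub : Finset.Icc (k1 + 1) (m - 2 - k2) ⊆ Finset.Icc 3 (m - 4) := by
      intro i hi
      rw [Finset.mem_Icc] at hi ⊢
      omega
    rw [← Finset.sum_subset hsub (by
      intro i hi hni
      rw [Finset.mem_Icc] at hi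
      rw [Finset.mem_Icc, not_and_or, not_le, not_le] at hni
      rcases hni with h | h
      · rw [Nat.choose_eq_zero_of_lt (show i - 1 - k1 < k1 - 2 by omega), Nat.zero_mul]
      · rw [Nat.choose_eq_zero_of_lt (show m - 1 - i - 1 - k2 < k2 - 2 by omega), Nat.mul_zero])]
    rw [show Finset.Icc (k1 + 1) (m - 2 - k2) = Finset.Ico (k1 + 1) (m - 2 - k2 + 1) by
      rw [Finset.Ico_add_one_right_eq_Icc], Finset.sum_Ico_eq_sum_range]
    have ht : m - 2 - k2 + 1 - (k1 + 1) = (m - 3 - k1 - k2) + 1 := by omega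
    rw [ht]
    have := vand (k1 - 2) (m - 3 - k1 - k2) (k2 - 2)
    have hcongr : ∀ a ∈ Finset.range ((m - 3 - k1 - k2) + 1),
        (k1 + 1 + a - 1 - k1).choose (k1 - 2) * (m - 1 - (k1 + 1 + a) - 1 - k2).choose (k2 - 2)
          = a.choose (k1 - 2) * ((m - 3 - k1 - k2) - a).choose (k2 - 2) := by
      intro a ha
      rw [Finset.mem_range] at ha
      congr 2 <;> omega
    rw [Finset.sum_congr rfl hcongr, this]
    congr 1 <;> omega


noncomputable def chC (j k : ℕ) : ℂ := ((j - 1 - k).choose (k - 2) : ℂ)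

noncomputable def eeC (j : ℕ) : ℂ :=
  if j = 1 then 1 else ∑ k ∈ Finset.Icc 2 ((j + 1) / 2), sC k * chC j k

lemma sC_one : sC 1 = 1 := by simp [sC]
lemma sC_two : sC 2 = -1 := by simp [sC, catalan_one]
lemma sC_three : sC 3 = 2 := by norm_num [sC, catalan_two]

lemma eeC_zero : eeC 0 = 0 := by norm_num [eeC]
lemma eeC_one : eeC 1 = 1 := by norm_num [eeC]
lemma eeC_two : eeC 2 = 0 := by norm_num [eeC]

lemma eeC_le_two (j : ℕ) (h : j ≤ 2) (h1 : j ≠ 1) : eeC j = 0 := by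
  interval_cases j
  · exact eeC_zero
  · omega
  · exact eeC_two

lemma chC_eq_zero {j k : ℕ} (h : j - 1 - k < k - 2) : chC j k = 0 := by
  rw [chC, Nat.choose_eq_zero_of_lt h, Nat.cast_zero]

lemma eeC_ext (j M : ℕ) (h3 : 3 ≤ j) (hM : (j + 1) / 2 ≤ M) :
    eeC j = ∑ k ∈ Finset.Icc 2 M, sC k * chC j k := by
  rw [eeC, if_neg (by omega)]
  apply Finset.sum_subset
  · intro k hk
    rw [Finset.mem_Icc] at hk ⊢
    omega
  · intro k hk hnk
    rw [Finset.mem_Icc] at hk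
    rw [Finset.mem_Icc, not_and_or, not_le, not_le] at hnk
    rw [chC_eq_zero (by omega), mul_zero]

/-- the central identity -/
lemma eeid (m : ℕ) (hm : 7 ≤ m) :
    eeC m + ∑ i ∈ Finset.range m, eeC i * eeC (m - 1 - i) = eeC (m - 1) := by
  classical
  set W : ℕ → ℂ := fun i => ∑ k ∈ Finset.Icc 2 m, sC k * chC i k with hW
  set E : ℕ → ℂ := fun i => if i = 1 then 0 else eeC i with hE
  -- Step 1: peel off the i = 1 and i = m-2 terms
  have step1 : ∑ i ∈ Finset.range m, eeC i * eeC (m - 1 - i)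
      = (∑ i ∈ Finset.range m, E i * E (m - 1 - i)) + eeC (m - 2) + eeC (m - 2) := by
    have hper : ∀ i ∈ Finset.range m, eeC i * eeC (m - 1 - i)
        = E i * E (m - 1 - i) + ((if i = 1 then eeC (m - 2) else 0)
            + (if i = m - 2 then eeC (m - 2) else 0)) := by
      intro i hi
      rw [Finset.mem_range] at hi
      have hEone : E 1 = 0 := by simp [hE]
      have hEeq : ∀ j, j ≠ 1 → E j = eeC j := by
        intro j hj; simp only [hE]; rw [if_neg hj]
      by_cases h1 : i = 1
      · subst h1
        rw [if_pos rfl, if_neg (by omega), hEone, zero_mul, eeC_one, one_mul,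
          show m - 1 - 1 = m - 2 by omega]
        ring
      · by_cases h2 : i = m - 2
        · subst h2
          rw [if_neg h1, if_pos rfl]
          have hj : m - 1 - (m - 2) = 1 := by omega
          rw [hj, eeC_one, mul_one, hEone, mul_zero]
          ring
        · have hj : m - 1 - i ≠ 1 := by omega
          rw [hEeq _ h1, hEeq _ hj, if_neg h1, if_neg h2, add_zero, add_zero]
    rw [Finset.sum_congr rfl hper, Finset.sum_add_distrib, Finset.sum_add_distrib,
      Finset.sum_ite_eq' (Finset.range m) 1 (fun _ => eeC (m - 2)),
      Finset.sum_ite_eq' (Finset.range m) (m - 2) (fun _ => eeC (m - 2)),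
      if_pos (Finset.mem_range.mpr (by omega)), if_pos (Finset.mem_range.mpr (by omega))]
    ring
  -- Step 2: restrict to the middle range, replacing E by W
  have step2 : ∑ i ∈ Finset.range m, E i * E (m - 1 - i)
      = ∑ i ∈ Finset.Icc 3 (m - 4), W i * W (m - 1 - i) := by
    have hper : ∀ i ∈ Finset.range m, E i * E (m - 1 - i)
        = if i ∈ Finset.Icc 3 (m - 4) then W i * W (m - 1 - i) else 0 := by
      intro i hi
      rw [Finset.mem_range] at hi
      by_cases hmem : i ∈ Finset.Icc 3 (m - 4)
      · rw [if_pos hmem]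
        rw [Finset.mem_Icc] at hmem
        have e1 : E i = W i := by
          simp only [hE]
          rw [if_neg (by omega)]
          exact eeC_ext i m (by omega) (by omega)
        have e2 : E (m - 1 - i) = W (m - 1 - i) := by
          simp only [hE]
          rw [if_neg (by omega)]
          exact eeC_ext (m - 1 - i) m (by omega) (by omega)
        rw [e1, e2]
      · rw [if_neg hmem]
        rw [Finset.mem_Icc, not_and_or, not_le, not_le] at hmem
        rcases hmem with h | h
        · by_cases h1 : i = 1
          · simp only [hE]; rw [if_pos h1, zero_mul]
          · simp only [hE]; rw [if_neg h1, eeC_le_two i (by omega) h1, zero_mul]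
        · by_cases hj1 : m - 1 - i = 1
          · simp only [hE]; rw [if_pos hj1, mul_zero]
          · have hj : m - 1 - i ≤ 2 := by omega
            simp only [hE]
            rw [if_neg hj1, eeC_le_two _ hj hj1, mul_zero]
    rw [Finset.sum_congr rfl hper, Finset.sum_ite_mem,
      Finset.inter_eq_right.mpr (by
        intro k hk
        rw [Finset.mem_Icc] at hk
        rw [Finset.mem_range]
        omega)]
  -- Step 3: expand the W products and apply the inner Vandermonde identity
  have step3 : ∑ i ∈ Finset.Icc 3 (m - 4), W i * W (m - 1 - i)
      = ∑ k1 ∈ Finset.Icc 2 m, ∑ k2 ∈ Finset.Icc 2 m,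
          sC k1 * sC k2 * (((m - 2 - (k1 + k2)).choose (k1 + k2 - 3) : ℕ) : ℂ) := by
    have expand : ∀ i ∈ Finset.Icc 3 (m - 4), W i * W (m - 1 - i)
        = ∑ k1 ∈ Finset.Icc 2 m, ∑ k2 ∈ Finset.Icc 2 m,
            sC k1 * sC k2 * (chC i k1 * chC (m - 1 - i) k2) := by
      intro i _
      rw [hW]
      rw [Finset.sum_mul_sum]
      apply Finset.sum_congr rfl; intro k1 _
      apply Finset.sum_congr rfl; intro k2 _
      ring
    rw [Finset.sum_congr rfl expand]
    rw [Finset.sum_comm]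
    apply Finset.sum_congr rfl; intro k1 hk1
    rw [Finset.sum_comm]
    apply Finset.sum_congr rfl; intro k2 hk2
    rw [Finset.mem_Icc] at hk1 hk2
    rw [← Finset.mul_sum]
    congr 1
    rw [← inner m k1 k2 hm hk1.1 hk2.1]
    push_cast [chC]
    rfl
  -- abbreviations
  set CCf : ℕ → ℂ := fun k => (((m - 2 - k).choose (k - 3) : ℕ) : ℂ) with hCCf
  set c2 : ℕ → ℂ := fun k => (((m - 3 - k).choose (k - 2) : ℕ) : ℂ) with hc2
  -- Step 4: group by K = k1 + k2 and evaluate the fibers via the catalan recurrence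
  have step4 : (∑ k1 ∈ Finset.Icc 2 m, ∑ k2 ∈ Finset.Icc 2 m,
          sC k1 * sC k2 * (((m - 2 - (k1 + k2)).choose (k1 + k2 - 3) : ℕ) : ℂ))
      = ∑ K ∈ Finset.Icc 4 (m - 3), (-(sC K * CCf K) - 2 * (sC (K - 1) * CCf K)) := by
    rw [← Finset.sum_product']
    rw [← Finset.sum_fiberwise_of_maps_to (g := fun p : ℕ × ℕ => p.1 + p.2)
        (t := Finset.range (2 * m + 1)) (fun p hp => by
          rw [Finset.mem_product, Finset.mem_Icc, Finset.mem_Icc] at hp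
          rw [Finset.mem_range]
          show p.1 + p.2 < 2 * m + 1
          omega)]
    have fib : ∀ K ∈ Finset.range (2 * m + 1),
        (∑ p ∈ (Finset.Icc 2 m ×ˢ Finset.Icc 2 m).filter (fun p => p.1 + p.2 = K),
          sC p.1 * sC p.2 * (((m - 2 - (p.1 + p.2)).choose (p.1 + p.2 - 3) : ℕ) : ℂ))
        = if K ∈ Finset.Icc 4 (m - 3) then
            (-(sC K * CCf K) - 2 * (sC (K - 1) * CCf K)) else 0 := by
      intro K _
      have hsummand : ∀ p ∈ (Finset.Icc 2 m ×ˢ Finset.Icc 2 m).filter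
            (fun p => p.1 + p.2 = K),
          sC p.1 * sC p.2 * (((m - 2 - (p.1 + p.2)).choose (p.1 + p.2 - 3) : ℕ) : ℂ)
          = sC p.1 * sC p.2 * CCf K := by
        intro p hp
        rw [Finset.mem_filter] at hp
        rw [hp.2, hCCf]
      rw [Finset.sum_congr rfl hsummand, ← Finset.sum_mul]
      by_cases hK4 : 4 ≤ K
      · by_cases hKm : K ≤ m - 3
        · rw [if_pos (Finset.mem_Icc.mpr ⟨hK4, hKm⟩)]
          have hbij : (∑ p ∈ (Finset.Icc 2 m ×ˢ Finset.Icc 2 m).filter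
                (fun p => p.1 + p.2 = K), sC p.1 * sC p.2)
              = ∑ k ∈ Finset.Icc 2 (K - 2), sC k * sC (K - k) := by
            apply Finset.sum_nbij' (fun p => p.1) (fun k => (k, K - k))
            · intro p hp
              rw [Finset.mem_filter, Finset.mem_product, Finset.mem_Icc, Finset.mem_Icc] at hp
              rw [Finset.mem_Icc]; omega
            · intro k hk
              rw [Finset.mem_Icc] at hk
              rw [Finset.mem_filter, Finset.mem_product, Finset.mem_Icc, Finset.mem_Icc]
              exact ⟨⟨⟨hk.1, by omega⟩, ⟨by omega, by omega⟩⟩, by omega⟩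
            · intro p hp
              rw [Finset.mem_filter] at hp
              have h2 : K - p.1 = p.2 := by
                have := hp.2; omega
              rw [h2]
            · intro k _
              rfl
            · intro p hp
              rw [Finset.mem_filter] at hp
              have h2 : K - p.1 = p.2 := by
                have := hp.2; omega
              rw [h2]
          rw [hbij]
          have hscat := scat K (by omega)
          have hsplit : Finset.Icc 1 (K - 1)
              = insert 1 (insert (K - 1) (Finset.Icc 2 (K - 2))) := by
            ext x
            simp only [Finset.mem_Icc, Finset.mem_insert]
            omega
          rw [hsplit, Finset.sum_insert (by
              simp only [Finset.mem_insert, Finset.mem_Icc]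
              omega),
            Finset.sum_insert (by
              simp only [Finset.mem_Icc]
              omega),
            show K - (K - 1) = 1 by omega, sC_one] at hscat
          linear_combination CCf K * hscat
        · rw [if_neg (by rw [Finset.mem_Icc]; omega)]
          simp only [hCCf]
          rw [Nat.choose_eq_zero_of_lt (by omega), Nat.cast_zero, mul_zero]
      · rw [if_neg (by rw [Finset.mem_Icc]; omega)]
        rw [Finset.sum_eq_zero, zero_mul]
        intro p hp
        exfalso
        rw [Finset.mem_filter, Finset.mem_product, Finset.mem_Icc, Finset.mem_Icc] at hp
        omega
    rw [Finset.sum_congr rfl fib, Finset.sum_ite_mem,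
      Finset.inter_eq_right.mpr (fun k hk => by
        rw [Finset.mem_Icc] at hk
        rw [Finset.mem_range]; omega)]
  -- Step 5: transform the two pieces into sums over Icc 2 m
  have hP1 : ∑ k ∈ Finset.Icc 2 m, sC k * CCf k
      = (∑ K ∈ Finset.Icc 4 (m - 3), sC K * CCf K) + (-1) + 2 := by
    have hper : ∀ k ∈ Finset.Icc 2 m, sC k * CCf k
        = (if k ∈ Finset.Icc 4 (m - 3) then sC k * CCf k else 0)
          + ((if k = 2 then (-1 : ℂ) else 0) + (if k = 3 then 2 else 0)) := by
      intro k hk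
      rw [Finset.mem_Icc] at hk
      by_cases hmem : k ∈ Finset.Icc 4 (m - 3)
      · have := Finset.mem_Icc.mp hmem
        rw [if_pos hmem, if_neg (by omega), if_neg (by omega)]
        ring
      · rw [if_neg hmem]
        rw [Finset.mem_Icc, not_and_or, not_le, not_le] at hmem
        by_cases h2 : k = 2
        · subst h2
          rw [if_pos rfl, if_neg (by omega)]
          simp only [hCCf, sC_two]
          rw [show (2 : ℕ) - 3 = 0 from rfl, Nat.choose_zero_right]
          norm_num
        · by_cases h3 : k = 3
          · subst h3
            rw [if_neg (by omega), if_pos rfl]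
            simp only [hCCf, sC_three]
            rw [show (3 : ℕ) - 3 = 0 from rfl, Nat.choose_zero_right]
            norm_num
          · rw [if_neg h2, if_neg h3]
            simp only [hCCf]
            rw [Nat.choose_eq_zero_of_lt (by omega), Nat.cast_zero, mul_zero]
            norm_num
    rw [Finset.sum_congr rfl hper, Finset.sum_add_distrib, Finset.sum_add_distrib,
      Finset.sum_ite_mem,
      Finset.inter_eq_right.mpr (fun k hk => by
        rw [Finset.mem_Icc] at hk ⊢; omega),
      Finset.sum_ite_eq' (Finset.Icc 2 m) 2 (fun _ => (-1 : ℂ)),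
      Finset.sum_ite_eq' (Finset.Icc 2 m) 3 (fun _ => (2 : ℂ)),
      if_pos (Finset.mem_Icc.mpr (by omega)), if_pos (Finset.mem_Icc.mpr (by omega))]
    ring
  have hP2 : ∑ K ∈ Finset.Icc 4 (m - 3), sC (K - 1) * CCf K
      = ∑ k ∈ Finset.Icc 3 (m - 4), sC k * c2 k := by
    apply Finset.sum_nbij' (fun K => K - 1) (fun k => k + 1)
    · intro K hK
      rw [Finset.mem_Icc] at hK ⊢; omega
    · intro k hk
      rw [Finset.mem_Icc] at hk ⊢; omega
    · intro K hK
      rw [Finset.mem_Icc] at hK; omega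
    · intro k hk
      rw [Finset.mem_Icc] at hk; omega
    · intro K hK
      rw [Finset.mem_Icc] at hK
      simp only [hCCf, hc2]
      rw [show m - 3 - (K - 1) = m - 2 - K by omega, show K - 1 - 2 = K - 3 by omega]
  have hP2b : ∑ k ∈ Finset.Icc 2 m, sC k * c2 k
      = (∑ k ∈ Finset.Icc 3 (m - 4), sC k * c2 k) + (-1) := by
    have hper : ∀ k ∈ Finset.Icc 2 m, sC k * c2 k
        = (if k ∈ Finset.Icc 3 (m - 4) then sC k * c2 k else 0)
          + (if k = 2 then (-1 : ℂ) else 0) := by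
      intro k hk
      rw [Finset.mem_Icc] at hk
      by_cases hmem : k ∈ Finset.Icc 3 (m - 4)
      · have := Finset.mem_Icc.mp hmem
        rw [if_pos hmem, if_neg (by omega)]
        ring
      · rw [if_neg hmem]
        rw [Finset.mem_Icc, not_and_or, not_le, not_le] at hmem
        by_cases h2 : k = 2
        · subst h2
          rw [if_pos rfl]
          simp only [hc2, sC_two]
          rw [show (2 : ℕ) - 2 = 0 from rfl, Nat.choose_zero_right]
          norm_num
        · rw [if_neg h2]
          simp only [hc2]
          rw [Nat.choose_eq_zero_of_lt (by omega), Nat.cast_zero, mul_zero]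
          norm_num
    rw [Finset.sum_congr rfl hper, Finset.sum_add_distrib,
      Finset.sum_ite_mem,
      Finset.inter_eq_right.mpr (fun k hk => by
        rw [Finset.mem_Icc] at hk ⊢; omega),
      Finset.sum_ite_eq' (Finset.Icc 2 m) 2 (fun _ => (-1 : ℂ)),
      if_pos (Finset.mem_Icc.mpr (by omega))]
  -- expand the three eeC values
  have hEm : eeC m = ∑ k ∈ Finset.Icc 2 m, sC k * chC m k :=
    eeC_ext m m (by omega) (by omega)
  have hEm1 : eeC (m - 1) = ∑ k ∈ Finset.Icc 2 m, sC k * chC (m - 1) k :=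
    eeC_ext (m - 1) m (by omega) (by omega)
  have hEm2 : eeC (m - 2) = ∑ k ∈ Finset.Icc 2 m, sC k * c2 k := by
    rw [eeC_ext (m - 2) m (by omega) (by omega)]
    apply Finset.sum_congr rfl
    intro k _
    simp only [hc2, chC]
    rw [show m - 2 - 1 - k = m - 3 - k by omega]
  -- the per-k Pascal cancellation
  have main : ∑ k ∈ Finset.Icc 2 m,
      (sC k * chC m k - sC k * CCf k - sC k * chC (m - 1) k) = 1 := by
    have hper : ∀ k ∈ Finset.Icc 2 m,
        sC k * chC m k - sC k * CCf k - sC k * chC (m - 1) k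
          = if k = 2 then (1 : ℂ) else 0 := by
      intro k hk
      rw [Finset.mem_Icc] at hk
      by_cases h2 : k = 2
      · subst h2
        rw [if_pos rfl]
        simp only [chC, hCCf, sC_two, Nat.choose_zero_right, Nat.cast_one]
        norm_num
      · rw [if_neg h2]
        by_cases hk2 : k ≤ m - 2
        · have hpas : (m - 1 - k).choose (k - 2)
              = (m - 2 - k).choose (k - 3) + (m - 2 - k).choose (k - 2) := by
            rw [show m - 1 - k = (m - 2 - k) + 1 by omega,
              show k - 2 = (k - 3) + 1 by omega, Nat.choose_succ_succ']
          simp only [chC, hCCf]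
          rw [show m - 1 - 1 - k = m - 2 - k by omega, hpas]
          push_cast
          ring
        · simp only [chC, hCCf]
          rw [Nat.choose_eq_zero_of_lt (show m - 1 - k < k - 2 by omega),
            Nat.choose_eq_zero_of_lt (show m - 2 - k < k - 3 by omega),
            Nat.choose_eq_zero_of_lt (show m - 1 - 1 - k < k - 2 by omega)]
          push_cast
          ring
    rw [Finset.sum_congr rfl hper,
      Finset.sum_ite_eq' (Finset.Icc 2 m) 2 (fun _ => (1 : ℂ)),
      if_pos (Finset.mem_Icc.mpr (by omega))]
  -- assemble everything
  rw [step1, step2, step3, step4]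
  rw [Finset.sum_sub_distrib]
  have hneg : ∑ K ∈ Finset.Icc 4 (m - 3), -(sC K * CCf K)
      = -∑ K ∈ Finset.Icc 4 (m - 3), sC K * CCf K := by
    rw [Finset.sum_neg_distrib]
  have h2mul : ∑ K ∈ Finset.Icc 4 (m - 3), 2 * (sC (K - 1) * CCf K)
      = 2 * ∑ K ∈ Finset.Icc 4 (m - 3), sC (K - 1) * CCf K := by
    rw [Finset.mul_sum]
  rw [hneg, h2mul, hP2, hEm, hEm1, hEm2]
  rw [Finset.sum_sub_distrib, Finset.sum_sub_distrib] at main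
  linear_combination main + hP1 + 2 * hP2b


noncomputable def ccC (l : ℕ) : ℂ :=
  ∑ k ∈ Finset.Icc 2 (l / 2), (bcat k : ℂ) * (((l - k - 2).choose (k - 2) : ℕ) : ℂ)

noncomputable def dd (j : ℕ) : ℂ :=
  if j = 1 then 1 else if 3 ≤ j then (-1) ^ (j + 1) * ccC (j + 1) else 0

lemma bcat_cast (k : ℕ) : ((bcat k : ℤ) : ℂ) = sC k := by
  unfold bcat sC
  push_cast
  ring

lemma dd_eq (j : ℕ) : dd j = (-1) ^ (j + 1) * eeC j := by
  match j with
  | 0 => rw [dd, eeC_zero]; norm_num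
  | 1 => rw [dd, eeC_one]; norm_num
  | 2 => rw [dd, eeC_two]; norm_num
  | (n + 3) =>
    rw [dd, if_neg (by omega), if_pos (by omega)]
    congr 1
    rw [eeC, if_neg (by omega), ccC]
    apply Finset.sum_congr rfl
    intro k hk
    rw [Finset.mem_Icc] at hk
    rw [bcat_cast, chC, show n + 3 + 1 - k - 2 = n + 3 - 1 - k by omega]

lemma dd_zero : dd 0 = 0 := by rw [dd]; norm_num
lemma dd_one : dd 1 = 1 := by rw [dd]; norm_num

lemma Icc_two_two : Finset.Icc 2 2 = ({2} : Finset ℕ) := rfl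
lemma Icc_two_three : Finset.Icc 2 3 = ({2, 3} : Finset ℕ) := rfl

lemma bcat_two : (bcat 2 : ℂ) = -1 := by norm_num [bcat, catalan_one]
lemma bcat_three : (bcat 3 : ℂ) = 2 := by norm_num [bcat, catalan_two]

lemma dd_two : dd 2 = 0 := by rw [dd]; norm_num
lemma dd_three : dd 3 = -1 := by
  rw [dd, if_neg (by omega), if_pos (by omega), ccC]
  norm_num [Icc_two_two, bcat_two]
lemma dd_four : dd 4 = 1 := by
  rw [dd, if_neg (by omega), if_pos (by omega), ccC]
  norm_num [Icc_two_two, bcat_two]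
lemma dd_five : dd 5 = 1 := by
  rw [dd, if_neg (by omega), if_pos (by omega), ccC]
  rw [show (6 : ℕ) / 2 = 3 from rfl, Icc_two_three, Finset.sum_insert (by decide),
    Finset.sum_singleton, bcat_two, bcat_three]
  norm_num
lemma dd_six : dd 6 = -3 := by
  rw [dd, if_neg (by omega), if_pos (by omega), ccC]
  rw [show (7 : ℕ) / 2 = 3 from rfl, Icc_two_three, Finset.sum_insert (by decide),
    Finset.sum_singleton, bcat_two, bcat_three]
  norm_num

/-- The key coefficient recurrence. -/
lemma key (m : ℕ) (hm : 1 ≤ m) :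
    (∑ i ∈ Finset.range m, dd i * dd (m - 1 - i)) + dd m + dd (m - 1)
      = (if m = 1 then 1 else 0) + (if m = 2 then 1 else 0) := by
  by_cases hm7 : 7 ≤ m
  · rw [if_neg (by omega), if_neg (by omega)]
    have hsum : ∀ i ∈ Finset.range m, dd i * dd (m - 1 - i)
        = (-1) ^ (m + 1) * (eeC i * eeC (m - 1 - i)) := by
      intro i hi
      rw [Finset.mem_range] at hi
      rw [dd_eq i, dd_eq (m - 1 - i)]
      have hpow : (-1 : ℂ) ^ (i + 1) * (-1) ^ (m - 1 - i + 1) = (-1) ^ (m + 1) := by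
        rw [← pow_add]
        congr 1
        omega
      calc (-1 : ℂ) ^ (i + 1) * eeC i * ((-1) ^ (m - 1 - i + 1) * eeC (m - 1 - i))
          = ((-1 : ℂ) ^ (i + 1) * (-1) ^ (m - 1 - i + 1)) * (eeC i * eeC (m - 1 - i)) := by ring
        _ = (-1) ^ (m + 1) * (eeC i * eeC (m - 1 - i)) := by rw [hpow]
    rw [Finset.sum_congr rfl hsum, ← Finset.mul_sum, dd_eq m, dd_eq (m - 1)]
    have hpow2 : (-1 : ℂ) ^ (m - 1 + 1) = -(-1) ^ (m + 1) := by
      rw [show m - 1 + 1 = m by omega, pow_succ]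
      ring
    rw [hpow2]
    have := eeid m hm7
    linear_combination ((-1 : ℂ) ^ (m + 1)) * this
  · interval_cases m
    · rw [Finset.sum_range_one, dd_zero, dd_one]
      norm_num
    · rw [Finset.sum_range_succ, Finset.sum_range_one, dd_zero, dd_one, dd_two]
      norm_num
    · rw [Finset.sum_range_succ, Finset.sum_range_succ, Finset.sum_range_one,
        dd_zero, dd_one, dd_two, dd_three]
      norm_num
    · rw [Finset.sum_range_succ, Finset.sum_range_succ, Finset.sum_range_succ,
        Finset.sum_range_one, dd_zero, dd_one, dd_two, dd_three, dd_four]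
      norm_num
    · rw [Finset.sum_range_succ, Finset.sum_range_succ, Finset.sum_range_succ,
        Finset.sum_range_succ, Finset.sum_range_one,
        dd_zero, dd_one, dd_two, dd_three, dd_four, dd_five]
      norm_num
    · rw [Finset.sum_range_succ, Finset.sum_range_succ, Finset.sum_range_succ,
        Finset.sum_range_succ, Finset.sum_range_succ, Finset.sum_range_one,
        dd_zero, dd_one, dd_two, dd_three, dd_four, dd_five, dd_six]
      norm_num


lemma zetaC_apply (n : ℕ) : zetaC n = if n = 0 then 0 else 1 := rfl

lemma AF_sub_apply (f g : ArithmeticFunction ℂ) (n : ℕ) : (f - g) n = f n - g n := rfl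

lemma alpha_zero_right (k : ℕ) : alpha k 0 = 0 := by
  rw [alpha, Nat.card_eq_zero]
  left
  constructor
  rintro ⟨f, h2, hp⟩
  rcases Finset.prod_eq_zero_iff.mp hp with ⟨i, -, hi⟩
  have := h2 i
  omega

lemma alpha_zero (m : ℕ) : alpha 0 m = if m = 1 then 1 else 0 := by
  rw [alpha]
  by_cases hm : m = 1
  · subst hm
    rw [if_pos rfl]
    rw [Nat.card_eq_one_iff_unique]
    constructor
    · constructor
      rintro ⟨f, hf⟩ ⟨g, hg⟩
      ext i
      exact i.elim0
    · exact ⟨⟨fun i => i.elim0, fun i => i.elim0, by simp⟩⟩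
  · rw [if_neg hm, Nat.card_eq_zero]
    left
    constructor
    rintro ⟨f, h2, hp⟩
    simp at hp
    exact hm hp.symm

/-- alpha as the cardinality of an explicit finset -/
lemma alpha_eq_card (k m : ℕ) (hm : m ≠ 0) :
    alpha k m = ((Fintype.piFinset (fun _ : Fin k => Finset.Icc 2 m)).filter
      (fun f => ∏ i, f i = m)).card := by
  rw [← Fintype.card_coe, ← Nat.card_eq_fintype_card, alpha]
  apply Nat.card_congr
  apply Equiv.subtypeEquivRight
  intro f
  simp only [Finset.mem_filter, Fintype.mem_piFinset, Finset.mem_Icc]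
  constructor
  · rintro ⟨h2, hp⟩
    refine ⟨fun i => ⟨h2 i, ?_⟩, hp⟩
    apply Nat.le_of_dvd (Nat.pos_of_ne_zero hm)
    rw [← hp]
    exact Finset.dvd_prod_of_mem f (Finset.mem_univ i)
  · rintro ⟨h, hp⟩
    exact ⟨fun i => (h i).1, hp⟩

lemma alpha_rec (j m : ℕ) (hm : m ≠ 0) :
    alpha (j + 1) m = ∑ p ∈ m.divisorsAntidiagonal,
      if 2 ≤ p.2 then alpha j p.1 else 0 := by
  classical
  rw [alpha_eq_card (j + 1) m hm]
  rw [Finset.card_eq_sum_card_fiberwise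
    (f := fun f : Fin (j + 1) → ℕ => ((∏ i : Fin j, f i.castSucc), f (Fin.last j)))
    (t := m.divisorsAntidiagonal) (by
      intro f hf
      rw [Finset.mem_coe, Finset.mem_filter, Fintype.mem_piFinset] at hf
      rw [Finset.mem_coe, Nat.mem_divisorsAntidiagonal]
      refine ⟨?_, hm⟩
      rw [← hf.2, Fin.prod_univ_castSucc])]
  apply Finset.sum_congr rfl
  intro p hp
  rw [Nat.mem_divisorsAntidiagonal] at hp
  have hp1 : p.1 ≠ 0 := by
    intro h
    rw [h, zero_mul] at hp
    exact hm hp.1.symm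
  have hp2 : p.2 ≠ 0 := by
    intro h
    rw [h, mul_zero] at hp
    exact hm hp.1.symm
  by_cases h2 : 2 ≤ p.2
  · rw [if_pos h2, alpha_eq_card j p.1 hp1]
    apply Finset.card_nbij' (fun f => f ∘ Fin.castSucc) (fun g => Fin.snoc g p.2)
    · intro f hf
      simp only [Finset.mem_coe, Finset.mem_filter, Fintype.mem_piFinset] at hf ⊢
      obtain ⟨⟨hmem, hprod⟩, hfib⟩ := hf
      have hl : f (Fin.last j) = p.2 := congrArg Prod.snd hfib
      have hpr : (∏ i : Fin j, f i.castSucc) = p.1 := congrArg Prod.fst hfib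
      constructor
      · intro i
        rw [Finset.mem_Icc]
        have := hmem i.castSucc
        rw [Finset.mem_Icc] at this
        refine ⟨this.1, ?_⟩
        apply Nat.le_of_dvd (Nat.pos_of_ne_zero hp1)
        rw [← hpr]
        exact Finset.dvd_prod_of_mem _ (Finset.mem_univ i)
      · exact hpr
    · intro g hg
      simp only [Finset.mem_coe, Finset.mem_filter, Fintype.mem_piFinset] at hg
      obtain ⟨hmem, hprod⟩ := hg
      simp only [Finset.mem_coe, Finset.mem_filter, Fintype.mem_piFinset]
      have hple : p.1 ≤ m := by
        apply Nat.le_of_dvd (Nat.pos_of_ne_zero hm)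
        exact ⟨p.2, hp.1.symm⟩
      have hp2le : p.2 ≤ m := by
        apply Nat.le_of_dvd (Nat.pos_of_ne_zero hm)
        exact ⟨p.1, by rw [mul_comm]; exact hp.1.symm⟩
      have hprodsnoc : (∏ i : Fin (j + 1), (Fin.snoc g p.2 : Fin (j + 1) → ℕ) i) = m := by
        rw [Fin.prod_univ_castSucc]
        simp only [Fin.snoc_castSucc, Fin.snoc_last]
        rw [hprod, hp.1]
      refine ⟨⟨?_, hprodsnoc⟩, ?_⟩
      · intro i
        refine Fin.lastCases ?_ ?_ i
        · rw [Fin.snoc_last, Finset.mem_Icc]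
          exact ⟨h2, hp2le⟩
        · intro k
          rw [Fin.snoc_castSucc, Finset.mem_Icc]
          have := hmem k
          rw [Finset.mem_Icc] at this
          exact ⟨this.1, le_trans this.2 hple⟩
      · rw [Prod.ext_iff]
        constructor
        · show (∏ i : Fin j, (Fin.snoc g p.2 : Fin (j + 1) → ℕ) i.castSucc) = p.1
          rw [← hprod]
          exact Finset.prod_congr rfl (fun i _ => by rw [Fin.snoc_castSucc])
        · show (Fin.snoc g p.2 : Fin (j + 1) → ℕ) (Fin.last j) = p.2
          rw [Fin.snoc_last]
    · intro f hf
      rw [Finset.mem_coe, Finset.mem_filter] at hf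
      have hl : f (Fin.last j) = p.2 := congrArg Prod.snd hf.2
      funext i
      dsimp only
      refine Fin.lastCases ?_ ?_ i
      · rw [Fin.snoc_last, hl]
      · intro k
        rw [Fin.snoc_castSucc]
        rfl
    · intro g hg
      funext i
      simp only [Function.comp_apply, Fin.snoc_castSucc]
  · rw [if_neg h2]
    rw [Finset.card_eq_zero]
    apply Finset.eq_empty_of_forall_notMem
    intro f hf
    rw [Finset.mem_filter, Finset.mem_filter, Fintype.mem_piFinset] at hf
    have hl : f (Fin.last j) = p.2 := congrArg Prod.snd hf.2
    have := hf.1.1 (Fin.last j)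
    rw [Finset.mem_Icc] at this
    omega

/-- powers of ζ - 1 count factorizations -/
lemma upow (j : ℕ) : ∀ n : ℕ, ((zetaC - 1) ^ j) n = (alpha j n : ℂ) := by
  induction j with
  | zero =>
    intro n
    rw [pow_zero, ArithmeticFunction.one_apply, alpha_zero]
    split <;> simp
  | succ j ih =>
    intro n
    rw [pow_succ, ArithmeticFunction.mul_apply]
    by_cases hn : n = 0
    · subst hn
      rw [Nat.divisorsAntidiagonal_zero, Finset.sum_empty, alpha_zero_right, Nat.cast_zero]
    · rw [alpha_rec j n hn]
      push_cast
      apply Finset.sum_congr rfl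
      intro p hp
      rw [Nat.mem_divisorsAntidiagonal] at hp
      have hp2 : p.2 ≠ 0 := by
        intro h
        rw [h, mul_zero] at hp
        exact hn hp.1.symm
      rw [ih p.1, AF_sub_apply, ArithmeticFunction.one_apply, zetaC_apply,
        if_neg hp2]
      by_cases h2 : 2 ≤ p.2
      · rw [if_pos h2, if_neg (by omega)]
        push_cast
        ring
      · have : p.2 = 1 := by omega
        rw [if_neg h2, this, if_pos rfl]
        push_cast
        ring
lemma Omega_mul {a b : ℕ} (ha : a ≠ 0) (hb : b ≠ 0) :
    Omega (a * b) = Omega a + Omega b := by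
  rw [Omega, Omega, Omega, ← List.length_append]
  exact (Nat.perm_primeFactorsList_mul ha hb).length_eq

lemma Omega_pos {a : ℕ} (h : 2 ≤ a) : 1 ≤ Omega a := by
  rw [Omega]
  rcases Nat.eq_zero_or_pos a.primeFactorsList.length with h0 | h1
  · rw [List.length_eq_zero_iff] at h0
    rw [Nat.primeFactorsList_eq_nil] at h0
    omega
  · exact h1

lemma Omega_dvd_le {d n : ℕ} (hd : d ∣ n) (hn : n ≠ 0) : Omega d ≤ Omega n := by
  obtain ⟨e, rfl⟩ := hd
  have hd0 : d ≠ 0 := by rintro rfl; exact hn (zero_mul e)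
  have he0 : e ≠ 0 := by rintro rfl; exact hn (mul_zero d)
  rw [Omega_mul hd0 he0]
  omega

lemma alpha_vanish : ∀ j n : ℕ, Omega n < j → alpha j n = 0 := by
  intro j
  induction j with
  | zero => omega
  | succ j ih =>
    intro n hn
    by_cases h0 : n = 0
    · rw [h0, alpha_zero_right]
    · rw [alpha_rec j n h0]
      apply Finset.sum_eq_zero
      intro p hp
      rw [Nat.mem_divisorsAntidiagonal] at hp
      by_cases h2 : 2 ≤ p.2
      · rw [if_pos h2]
        apply ih
        have hp1 : p.1 ≠ 0 := by
          intro h; rw [h, zero_mul] at hp; exact h0 hp.1.symm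
        have := Omega_pos h2
        have hmul : Omega n = Omega p.1 + Omega p.2 := by
          rw [← hp.1, Omega_mul hp1 (by omega)]
        omega
      · rw [if_neg h2]

lemma upow_vanish {j n : ℕ} (h : Omega n < j) : ((zetaC - 1) ^ j) n = 0 := by
  rw [upow j n, alpha_vanish j n h, Nat.cast_zero]


-- ### the delta ring hom
noncomputable def delta (c : ℂ) : ArithmeticFunction ℂ :=
  ⟨fun n => if n = 1 then c else 0, rfl⟩

lemma delta_apply (c : ℂ) (n : ℕ) : delta c n = if n = 1 then c else 0 := rfl

lemma delta_mul_apply (c : ℂ) (f : ArithmeticFunction ℂ) (n : ℕ) :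
    (delta c * f) n = c * f n := by
  rw [ArithmeticFunction.mul_apply]
  by_cases hn : n = 0
  · subst hn
    rw [Nat.divisorsAntidiagonal_zero, Finset.sum_empty, ArithmeticFunction.map_zero, mul_zero]
  · rw [Finset.sum_eq_single_of_mem (1, n)
      (Nat.mem_divisorsAntidiagonal.mpr ⟨one_mul n, hn⟩)]
    · rw [delta_apply, if_pos rfl]
    · intro p hp hne
      rw [Nat.mem_divisorsAntidiagonal] at hp
      have h1 : p.1 ≠ 1 := by
        intro h
        apply hne
        have : p.2 = n := by rw [← hp.1, h, one_mul]
        rw [← h, ← this]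
      rw [delta_apply, if_neg h1, zero_mul]

noncomputable def deltaHom : ℂ →+* ArithmeticFunction ℂ where
  toFun := delta
  map_one' := by
    ext n
    rw [delta_apply, ArithmeticFunction.one_apply]
  map_mul' c d := by
    ext n
    rw [delta_mul_apply, delta_apply, delta_apply]
    by_cases hn : n = 1
    · rw [if_pos hn, if_pos hn]
    · rw [if_neg hn, if_neg hn, mul_zero]
  map_zero' := by
    ext n
    rw [delta_apply, ArithmeticFunction.zero_apply]
    split <;> rfl
  map_add' c d := by
    ext n
    show (if n = 1 then c + d else 0) = (delta c + delta d) n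
    rw [ArithmeticFunction.add_apply, delta_apply, delta_apply]
    split <;> simp

noncomputable def phi : Polynomial ℂ →+* ArithmeticFunction ℂ :=
  Polynomial.eval₂RingHom deltaHom (zetaC - 1)

noncomputable def evalAt (n : ℕ) : ArithmeticFunction ℂ →+ ℂ where
  toFun f := f n
  map_zero' := rfl
  map_add' _ _ := rfl

-- ### the polynomials
noncomputable def pN (N : ℕ) : Polynomial ℂ :=
  ∑ j ∈ Finset.Icc 1 N, Polynomial.C (dd j) * Polynomial.X ^ j

noncomputable def qN (N : ℕ) : Polynomial ℂ :=
  Polynomial.X * pN N ^ 2 + (1 + Polynomial.X) * pN N - (1 + Polynomial.X) * Polynomial.X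

lemma coeff_pN (N i : ℕ) : (pN N).coeff i = if i ∈ Finset.Icc 1 N then dd i else 0 := by
  rw [pN, Polynomial.finset_sum_coeff]
  have h : ∀ j ∈ Finset.Icc 1 N, (Polynomial.C (dd j) * Polynomial.X ^ j).coeff i
      = if j = i then dd j else 0 := by
    intro j _
    rw [Polynomial.coeff_C_mul, Polynomial.coeff_X_pow]
    by_cases h : i = j
    · rw [if_pos h, if_pos h.symm, mul_one]
    · rw [if_neg h, if_neg (Ne.symm h), mul_zero]
  rw [Finset.sum_congr rfl h, Finset.sum_ite_eq' (Finset.Icc 1 N) i dd]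

lemma coeff_pN_le {N i : ℕ} (h : i ≤ N) : (pN N).coeff i = dd i := by
  rw [coeff_pN]
  by_cases h0 : i = 0
  · rw [if_neg (by rw [Finset.mem_Icc]; omega), h0, dd_zero]
  · rw [if_pos (Finset.mem_Icc.mpr ⟨by omega, h⟩)]

lemma qN_coeff_zero (N : ℕ) {m : ℕ} (hm : m ≤ N) : (qN N).coeff m = 0 := by
  rw [qN, Polynomial.coeff_sub, Polynomial.coeff_add]
  rcases Nat.eq_zero_or_pos m with h0 | h1
  · subst h0
    rw [Polynomial.mul_coeff_zero, Polynomial.mul_coeff_zero, Polynomial.mul_coeff_zero,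
      Polynomial.coeff_X_zero, coeff_pN_le (Nat.zero_le N), dd_zero]
    ring
  · obtain ⟨m', rfl⟩ : ∃ m', m = m' + 1 := ⟨m - 1, by omega⟩
    rw [Polynomial.coeff_X_mul, sq, Polynomial.coeff_mul,
      add_mul, one_mul, Polynomial.coeff_add, Polynomial.coeff_X_mul,
      coeff_pN_le (show m' + 1 ≤ N by omega), coeff_pN_le (show m' ≤ N by omega),
      show (1 + Polynomial.X) * Polynomial.X = Polynomial.X ^ 1 + Polynomial.X ^ 2 by ring,
      Polynomial.coeff_add, Polynomial.coeff_X_pow, Polynomial.coeff_X_pow]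
    have hconv : ∑ p ∈ Finset.HasAntidiagonal.antidiagonal m', (pN N).coeff p.1 * (pN N).coeff p.2
        = ∑ i ∈ Finset.range (m' + 1), dd i * dd (m' - i) := by
      rw [Finset.Nat.sum_antidiagonal_eq_sum_range_succ_mk]
      apply Finset.sum_congr rfl
      intro k hk
      rw [Finset.mem_range] at hk
      show (pN N).coeff k * (pN N).coeff (m' - k) = _
      rw [coeff_pN_le (show k ≤ N by omega), coeff_pN_le (show m' - k ≤ N by omega)]
    have hkey := key (m' + 1) (by omega)
    simp only [Nat.add_sub_cancel] at hkey ⊢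
    rw [hconv]
    linear_combination hkey

lemma qN_dvd (N : ℕ) : Polynomial.X ^ (N + 1) ∣ qN N :=
  Polynomial.X_pow_dvd_iff.mpr fun d hd => qN_coeff_zero N (by omega)

-- ### evaluation of phi
lemma phi_pN_apply (N n : ℕ) :
    (phi (pN N)) n = ∑ j ∈ Finset.Icc 1 N, dd j * (alpha j n : ℂ) := by
  rw [pN, map_sum]
  rw [show ((∑ j ∈ Finset.Icc 1 N, phi (Polynomial.C (dd j) * Polynomial.X ^ j)) n)
      = ∑ j ∈ Finset.Icc 1 N, (phi (Polynomial.C (dd j) * Polynomial.X ^ j)) n from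
    map_sum (evalAt n) _ _]
  apply Finset.sum_congr rfl
  intro j _
  rw [map_mul, map_pow]
  have hC : phi (Polynomial.C (dd j)) = delta (dd j) := by
    show Polynomial.eval₂ deltaHom (zetaC - 1) (Polynomial.C (dd j)) = delta (dd j)
    rw [Polynomial.eval₂_C]
    rfl
  have hX : phi Polynomial.X = zetaC - 1 := by
    show Polynomial.eval₂ deltaHom (zetaC - 1) Polynomial.X = zetaC - 1
    rw [Polynomial.eval₂_X]
  rw [hC, hX, delta_mul_apply, upow j n]

lemma phi_X : phi Polynomial.X = zetaC - 1 := by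
  show Polynomial.eval₂ deltaHom (zetaC - 1) Polynomial.X = zetaC - 1
  rw [Polynomial.eval₂_X]

lemma aFun_apply {d : ℕ} (hd : d ≠ 0) : aFun d = aCoef d := by
  show (if d = 0 then 0 else aCoef d) = aCoef d
  rw [if_neg hd]

lemma aCoef_eq {d N : ℕ} (hd : d ≠ 0) (hΩ : Omega d ≤ N) :
    aCoef d = ∑ j ∈ Finset.Icc 1 N, dd j * (alpha j d : ℂ) := by
  have htrunc : ∑ j ∈ Finset.Icc 1 N, dd j * (alpha j d : ℂ)
      = ∑ j ∈ Finset.Icc 1 (Omega d), dd j * (alpha j d : ℂ) := by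
    symm
    apply Finset.sum_subset
    · intro j hj
      rw [Finset.mem_Icc] at hj ⊢
      omega
    · intro j hj hnj
      rw [Finset.mem_Icc] at hj
      rw [Finset.mem_Icc, not_and_or, not_le, not_le] at hnj
      rw [alpha_vanish j d (by omega), Nat.cast_zero, mul_zero]
  rw [htrunc]
  have hsplit : ∀ j ∈ Finset.Icc 1 (Omega d), dd j * (alpha j d : ℂ)
      = (if j = 1 then (alpha 1 d : ℂ) else 0)
        + (if j ∈ Finset.Icc 3 (Omega d) then dd j * (alpha j d : ℂ) else 0) := by
    intro j hj
    rw [Finset.mem_Icc] at hj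
    by_cases h1 : j = 1
    · subst h1
      rw [if_pos rfl, if_neg (by rw [Finset.mem_Icc]; omega), dd_one, one_mul, add_zero]
    · rw [if_neg h1]
      by_cases h3 : 3 ≤ j
      · rw [if_pos (Finset.mem_Icc.mpr ⟨h3, hj.2⟩), zero_add]
      · have h2 : j = 2 := by omega
        subst h2
        rw [if_neg (by rw [Finset.mem_Icc]; omega), dd_two, zero_mul, add_zero]
  rw [Finset.sum_congr rfl hsplit, Finset.sum_add_distrib,
    Finset.sum_ite_eq' (Finset.Icc 1 (Omega d)) 1 (fun _ => (alpha 1 d : ℂ)),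
    Finset.sum_ite_mem,
    Finset.inter_eq_right.mpr (by
      intro k hk
      rw [Finset.mem_Icc] at hk ⊢
      omega)]
  rw [aCoef]
  congr 1
  · by_cases hD : 1 ≤ Omega d
    · rw [if_pos (Finset.mem_Icc.mpr ⟨le_refl 1, hD⟩)]
    · rw [if_neg (by rw [Finset.mem_Icc]; omega), alpha_vanish 1 d (by omega), Nat.cast_zero]
  · apply Finset.sum_nbij' (fun l => l - 1) (fun j => j + 1)
    · intro l hl
      rw [Finset.mem_Icc] at hl ⊢
      omega
    · intro j hj
      rw [Finset.mem_Icc] at hj ⊢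
      omega
    · intro l hl
      rw [Finset.mem_Icc] at hl
      omega
    · intro j hj
      omega
    · intro l hl
      rw [Finset.mem_Icc] at hl
      rw [dd, if_neg (by omega), if_pos (by omega), show l - 1 + 1 = l by omega, ccC]
      ring

def Req (n : ℕ) (f g : ArithmeticFunction ℂ) : Prop := ∀ d, d ∣ n → f d = g d

lemma Req_mul {n : ℕ} {f g f' g' : ArithmeticFunction ℂ} (hf : Req n f f') (hg : Req n g g') :
    Req n (f * g) (f' * g') := by
  intro d hd
  rw [ArithmeticFunction.mul_apply, ArithmeticFunction.mul_apply]
  apply Finset.sum_congr rfl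
  intro p hp
  rw [Nat.mem_divisorsAntidiagonal] at hp
  have h1 : p.1 ∣ n := dvd_trans ⟨p.2, hp.1.symm⟩ hd
  have h2 : p.2 ∣ n := dvd_trans ⟨p.1, by rw [mul_comm]; exact hp.1.symm⟩ hd
  rw [hf _ h1, hg _ h2]


/-- In the ring of arithmetic functions under Dirichlet convolution,
`(ζ − 1) * a * a + ζ * a − ζ * (ζ − 1) = 0`. -/
theorem stmt17 :
    (zetaC - 1) * aFun * aFun + zetaC * aFun - zetaC * (zetaC - 1) = 0 := by
  ext n
  rw [ArithmeticFunction.zero_apply]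
  by_cases hn : n = 0
  · subst hn
    exact ArithmeticFunction.map_zero
  · set N := Omega n with hN
    have hgagree : Req n aFun (phi (pN N)) := by
      intro d hd
      have hd0 : d ≠ 0 := by rintro rfl; exact hn (Nat.eq_zero_of_zero_dvd hd)
      rw [aFun_apply hd0, phi_pN_apply, aCoef_eq hd0 (Omega_dvd_le hd hn)]
    have hexpr : ((zetaC - 1) * aFun * aFun + zetaC * aFun - zetaC * (zetaC - 1)) n
        = ((zetaC - 1) * phi (pN N) * phi (pN N) + zetaC * phi (pN N)
            - zetaC * (zetaC - 1)) n := by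
      have hmul1 := Req_mul (Req_mul (fun d _ => rfl : Req n (zetaC - 1) (zetaC - 1)) hgagree)
        hgagree
      have hmul2 := Req_mul (fun d _ => rfl : Req n zetaC zetaC) hgagree
      simp only [AF_sub_apply, ArithmeticFunction.add_apply]
      rw [hmul1 n (dvd_refl n), hmul2 n (dvd_refl n)]
    rw [hexpr]
    have hphi_q : (zetaC - 1) * phi (pN N) * phi (pN N) + zetaC * phi (pN N)
        - zetaC * (zetaC - 1) = phi (qN N) := by
      rw [qN, map_sub, map_add, map_mul, map_mul, map_mul, map_pow, phi_X, map_add, map_one,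
        phi_X]
      have hz : (1 : ArithmeticFunction ℂ) + (zetaC - 1) = zetaC := by ring
      rw [hz]
      ring
    rw [hphi_q]
    obtain ⟨r, hr⟩ := qN_dvd N
    rw [hr, map_mul, map_pow, phi_X, ArithmeticFunction.mul_apply]
    apply Finset.sum_eq_zero
    intro p hp
    rw [Nat.mem_divisorsAntidiagonal] at hp
    have h1 : p.1 ∣ n := ⟨p.2, hp.1.symm⟩
    rw [upow_vanish (by
      have := Omega_dvd_le h1 hn
      omega), zero_mul]
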